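/- arXiv:1403.6541 — 3 statements merged into one kernel-verified Lean document; each statement's English description precedes it below -/
import Mathlib

section
/- Let r ∈ ℕ, r ≥ 1, n = 2^r. For all 0 ≤ j ≤ l ≤ r−1, 0 ≤ p ≤ 2^l−1 and every ω ∈ W_j, the discrete Fourier transform of the Haar wavelet satisfies the stronger bound |Fφ_{l,p}(ω)| ≤ (π²/4) · 2^{−j/2} · 2^{−3(l−j)/2}. -/
/-- The discrete Fourier transform of `x ∈ ℂ^(2^r)`:
`Fx(ω) = n^{-1/2} ∑_{t=0}^{n-1} x(t) e^{2πiωt/n}` with `n = 2^r`. -/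
noncomputable def dft (r : ℕ) (x : Fin (2^r) → ℂ) (ω : ℤ) : ℂ :=
  (Real.sqrt (2^r) : ℂ)⁻¹ *
    ∑ t : Fin (2^r), x t * Complex.exp (2 * Real.pi * Complex.I * (ω : ℂ) * ((t : ℕ) : ℂ) / (2^r : ℂ))

/-- The Haar scaling vector `ψ(t) = 2^{-r/2}`. -/
noncomputable def haarPsi (r : ℕ) : Fin (2^r) → ℂ :=
  fun _ => (((2:ℝ) ^ (-(r:ℝ)/2) : ℝ) : ℂ)

/-- The discrete Haar wavelet at scale `j` and position `p`. -/
noncomputable def haarPhi (r j p : ℕ) : Fin (2^r) → ℂ := fun t =>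
  if p * 2^(r-j) ≤ (t:ℕ) ∧ (t:ℕ) < p * 2^(r-j) + 2^(r-j-1) then
    (((2:ℝ) ^ (((j:ℝ) - r)/2) : ℝ) : ℂ)
  else if p * 2^(r-j) + 2^(r-j-1) ≤ (t:ℕ) ∧ (t:ℕ) < (p+1) * 2^(r-j) then
    -(((2:ℝ) ^ (((j:ℝ) - r)/2) : ℝ) : ℂ)
  else 0

/-- The frequency bands: `W_0 = {0,1}` and
`W_j = {-2^j+1,…,-2^{j-1}} ∪ {2^{j-1}+1,…,2^j}` for `j ≥ 1`. -/
noncomputable def bandW (j : ℕ) : Finset ℤ :=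
  if j = 0 then {0, 1}
  else Finset.Icc (-(2:ℤ)^j + 1) (-(2:ℤ)^(j-1)) ∪ Finset.Icc ((2:ℤ)^(j-1) + 1) ((2:ℤ)^j)

/- auxiliary: |e^{iθ} - 1| = 2|sin(θ/2)| -/
lemma aux_abs_exp_sub_one (θ : ℝ) :
    ‖Complex.exp ((θ:ℂ) * Complex.I) - 1‖ = 2 * |Real.sin (θ/2)| := by
  have key : Complex.exp ((θ:ℂ) * Complex.I) - 1
      = (2 * Real.sin (θ/2) * Complex.I) * Complex.exp (((θ/2 : ℝ):ℂ) * Complex.I) := by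
    rw [Complex.exp_mul_I, Complex.exp_mul_I]
    have h1 : (θ:ℂ) = 2 * ((θ/2 : ℝ):ℂ) := by push_cast; ring
    rw [h1, Complex.cos_two_mul', Complex.sin_two_mul]
    have h2 := Complex.sin_sq_add_cos_sq (((θ/2 : ℝ):ℂ))
    push_cast [Complex.ofReal_div] at h2 ⊢
    linear_combination (-2 * Complex.sin ((θ:ℂ)/2)^2) * Complex.I_sq + h2
  rw [key, norm_mul, norm_mul, norm_mul, Complex.norm_exp_ofReal_mul_I, Complex.norm_I,
    Complex.norm_real, Real.norm_eq_abs, Complex.norm_two]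
  ring

/- auxiliary ℕ-indexed Haar function -/
noncomputable def haarN (r j p : ℕ) (t : ℕ) : ℂ :=
  if p * 2^(r-j) ≤ t ∧ t < p * 2^(r-j) + 2^(r-j-1) then
    (((2:ℝ) ^ (((j:ℝ) - r)/2) : ℝ) : ℂ)
  else if p * 2^(r-j) + 2^(r-j-1) ≤ t ∧ t < (p+1) * 2^(r-j) then
    -(((2:ℝ) ^ (((j:ℝ) - r)/2) : ℝ) : ℂ)
  else 0

lemma haar_sum (r l p : ℕ) (hlr : l + 1 ≤ r) (hp : p + 1 ≤ 2^l) (z : ℂ) :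
    ∑ t : Fin (2^r), haarPhi r l p t * z^(t:ℕ)
      = (((2:ℝ) ^ (((l:ℝ) - (r:ℝ))/2) : ℝ) : ℂ) *
        ((∑ t ∈ Finset.Ico (p*2^(r-l)) (p*2^(r-l) + 2^(r-l-1)), z^t)
         - ∑ t ∈ Finset.Ico (p*2^(r-l) + 2^(r-l-1)) (p*2^(r-l) + 2^(r-l)), z^t) := by
  set a : ℂ := (((2:ℝ) ^ (((l:ℝ) - (r:ℝ))/2) : ℝ) : ℂ) with ha
  set A := p * 2^(r-l) with hA
  set h := 2^(r-l-1) with hh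
  have h2 : 2^(r-l) = h + h := by
    rw [hh, ← two_mul, ← pow_succ']
    congr 1
    omega
  have hub : (p+1) * 2^(r-l) = A + (h + h) := by rw [hA, ← h2]; ring
  have hrange : A + (h + h) ≤ 2^r := by
    rw [← hub]
    calc (p+1) * 2^(r-l) ≤ 2^l * 2^(r-l) := Nat.mul_le_mul_right _ hp
    _ = 2^r := by rw [← pow_add]; congr 1; omega
  have step1 : ∑ t : Fin (2^r), haarPhi r l p t * z^(t:ℕ)
      = ∑ t ∈ Finset.range (2^r), haarN r l p t * z^t := by
    rw [← Fin.sum_univ_eq_sum_range (fun t => haarN r l p t * z^t) (2^r)]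
    rfl
  rw [step1]
  rw [← Finset.sum_subset (s₁ := Finset.Ico A (A + (h+h))) (by
      intro x hx
      simp only [Finset.mem_Ico] at hx
      exact Finset.mem_range.2 (lt_of_lt_of_le hx.2 hrange))
    (by
      intro x _ hx
      simp only [Finset.mem_Ico, not_and, not_lt] at hx
      have : haarN r l p x = 0 := by
        rw [haarN]
        split_ifs with c1 c2
        · exfalso; omega
        · exfalso; omega
        · rfl
      rw [this, zero_mul])]
  rw [← Finset.sum_Ico_consecutive _ (Nat.le_add_right A h)
    (Nat.add_le_add_left (Nat.le_add_right h h) A)]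
  have e1 : ∀ t ∈ Finset.Ico A (A+h), haarN r l p t * z^t = a * z^t := by
    intro t ht
    simp only [Finset.mem_Ico] at ht
    rw [haarN, if_pos ⟨ht.1, ht.2⟩]
  have e2 : ∀ t ∈ Finset.Ico (A+h) (A+(h+h)), haarN r l p t * z^t = -(a * z^t) := by
    intro t ht
    simp only [Finset.mem_Ico] at ht
    rw [haarN, if_neg (by omega), if_pos ⟨ht.1, by omega⟩]
    ring
  rw [Finset.sum_congr rfl e1, Finset.sum_congr rfl e2, ← Finset.mul_sum, Finset.sum_neg_distrib,
    ← Finset.mul_sum]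
  have : A + 2^(r-l) = A + (h+h) := by rw [h2]
  rw [this]
  ring

lemma geom_eval {z : ℂ} (hz : z ≠ 1) (A h : ℕ) :
    (∑ t ∈ Finset.Ico A (A + h), z^t) - ∑ t ∈ Finset.Ico (A + h) (A + (h + h)), z^t
      = -(z^A * (z^h - 1)^2) / (z - 1) := by
  rw [geom_sum_Ico hz (Nat.le_add_right A h),
     geom_sum_Ico hz (by omega : A + h ≤ A + (h + h))]
  have e1 : z^(A+h) = z^A * z^h := pow_add z A h
  have e2 : z^(A+(h+h)) = z^A * z^h * z^h := by rw [pow_add, pow_add]; ring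
  rw [e1, e2]
  have : z - 1 ≠ 0 := sub_ne_zero.2 hz
  field_simp
  ring


lemma final_num (r j l : ℕ) (W : ℝ) (hlr : l + 1 ≤ r) (hjl : j ≤ l) (hW0 : 0 < W)
    (hW2 : W ≤ (2:ℝ)^j) :
    (Real.sqrt (2^r))⁻¹ * ((2:ℝ)^(((l:ℝ) - (r:ℝ))/2) * (Real.pi^2 * W * ((2^(r-l-1):ℕ):ℝ)^2 / 2^r))
      ≤ (Real.pi^2 / 4) * (2:ℝ)^(-(j:ℝ)/2) * (2:ℝ)^(-(3 * ((l:ℝ) - (j:ℝ)))/2) := by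
  have hπ := Real.pi_pos
  have A2 : (0:ℝ) ≤ 2 := by norm_num
  have P2 : (0:ℝ) < 2 := by norm_num
  have mul2 : ∀ u v : ℝ, (2:ℝ)^u * (2:ℝ)^v = (2:ℝ)^(u+v) := fun u v => (Real.rpow_add P2 u v).symm
  have sqr : ∀ u : ℝ, ((2:ℝ)^u)^(2:ℕ) = (2:ℝ)^(u+u) := fun u => by
    rw [sq, mul2]
  have e1 : Real.sqrt ((2:ℝ)^r) = (2:ℝ)^((r:ℝ)/2) := by
    rw [Real.sqrt_eq_rpow, ← Real.rpow_natCast 2 r, ← Real.rpow_mul A2]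
    ring_nf
  have e2 : ((2^(r-l-1):ℕ):ℝ) = (2:ℝ)^((r:ℝ) - (l:ℝ) - 1) := by
    push_cast
    rw [← Real.rpow_natCast 2 (r-l-1)]
    congr 1
    rw [show r - l - 1 = r - (l+1) from by omega, Nat.cast_sub hlr]
    push_cast
    ring
  have e3 : ((2:ℝ)^r) = (2:ℝ)^((r:ℝ)) := (Real.rpow_natCast 2 r).symm
  have e4 : W ≤ (2:ℝ)^((j:ℝ)) := by rw [Real.rpow_natCast]; exact hW2
  have lhs_eq : (Real.sqrt (2^r))⁻¹ *
      ((2:ℝ)^(((l:ℝ) - (r:ℝ))/2) * (Real.pi^2 * W * ((2^(r-l-1):ℕ):ℝ)^2 / 2^r))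
      = Real.pi^2 * W * (2:ℝ)^(-(3*(l:ℝ))/2 - 2) := by
    have inv2 : ∀ u : ℝ, ((2:ℝ)^u)⁻¹ = (2:ℝ)^(-u) := fun u => (Real.rpow_neg A2 u).symm
    have d2 : ∀ u v : ℝ, (2:ℝ)^u / (2:ℝ)^v = (2:ℝ)^(u-v) := fun u v => (Real.rpow_sub P2 u v).symm
    rw [e1, e2, e3, sqr, inv2, mul_div_assoc, d2]
    calc (2:ℝ)^(-((r:ℝ)/2)) * ((2:ℝ)^(((l:ℝ)-(r:ℝ))/2) *
          (Real.pi^2 * W * (2:ℝ)^((((r:ℝ)-(l:ℝ)-1) + ((r:ℝ)-(l:ℝ)-1)) - (r:ℝ))))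
        = Real.pi^2 * W * ((2:ℝ)^(-((r:ℝ)/2)) * ((2:ℝ)^(((l:ℝ)-(r:ℝ))/2) *
          (2:ℝ)^((((r:ℝ)-(l:ℝ)-1) + ((r:ℝ)-(l:ℝ)-1)) - (r:ℝ)))) := by ring
      _ = Real.pi^2 * W * (2:ℝ)^(-(3*(l:ℝ))/2 - 2) := by
          rw [mul2, mul2]
          congr 1
          ring
  have rhs_eq : (Real.pi^2 / 4) * (2:ℝ)^(-(j:ℝ)/2) * (2:ℝ)^(-(3 * ((l:ℝ) - (j:ℝ)))/2)
      = Real.pi^2 * ((2:ℝ)^((j:ℝ)) * (2:ℝ)^(-(3*(l:ℝ))/2 - 2)) := by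
    have h4 : ((4:ℝ))⁻¹ = (2:ℝ)^(-(2:ℝ)) := by
      rw [Real.rpow_neg A2]
      norm_num
    calc (Real.pi^2 / 4) * (2:ℝ)^(-(j:ℝ)/2) * (2:ℝ)^(-(3 * ((l:ℝ) - (j:ℝ)))/2)
        = Real.pi^2 * ((4:ℝ)⁻¹ * ((2:ℝ)^(-(j:ℝ)/2) * (2:ℝ)^(-(3 * ((l:ℝ) - (j:ℝ)))/2))) := by
          ring
      _ = Real.pi^2 * ((2:ℝ)^(-(2:ℝ)) * ((2:ℝ)^(-(j:ℝ)/2 + -(3 * ((l:ℝ) - (j:ℝ)))/2))) := by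
          rw [h4, mul2]
      _ = Real.pi^2 * ((2:ℝ)^((j:ℝ)) * (2:ℝ)^(-(3*(l:ℝ))/2 - 2)) := by
          rw [mul2, mul2]
          congr 1
          ring
  rw [lhs_eq, rhs_eq]
  have hC : (0:ℝ) < (2:ℝ)^(-(3*(l:ℝ))/2 - 2) := Real.rpow_pos_of_pos P2 _
  nlinarith [mul_le_mul_of_nonneg_right e4 hC.le, sq_nonneg Real.pi]

/-- For `r ≥ 1`, `0 ≤ j ≤ l ≤ r-1`, `0 ≤ p ≤ 2^l-1` and every `ω ∈ W_j`, the stronger bound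
`|Fφ_{l,p}(ω)| ≤ (π²/4) 2^{-j/2} 2^{-3(l-j)/2}`. -/
theorem abs_dft_haarPhi_le_of_le (r j l p : ℕ) (hr : 1 ≤ r) (hjl : j ≤ l) (hl : l ≤ r - 1)
    (hp : p ≤ 2^l - 1) (ω : ℤ) (hω : ω ∈ bandW j) :
    ‖dft r (haarPhi r l p) ω‖ ≤
      (Real.pi^2 / 4) * (2:ℝ)^(-(j:ℝ)/2) * (2:ℝ)^(-(3 * ((l:ℝ) - (j:ℝ)))/2) := by
  have hlr : l + 1 ≤ r := by omega
  have h2l : 1 ≤ 2^l := Nat.one_le_two_pow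
  have hp' : p + 1 ≤ 2^l := by omega
  -- the base point z
  set θ : ℝ := 2 * Real.pi * ω / 2^r with hθ
  set z : ℂ := Complex.exp ((θ:ℂ) * Complex.I) with hz
  have hrw : ∀ t : Fin (2^r),
      Complex.exp (2 * Real.pi * Complex.I * (ω : ℂ) * ((t : ℕ) : ℂ) / (2^r : ℂ)) = z^(t:ℕ) := by
    intro t
    rw [hz, ← Complex.exp_nat_mul]
    congr 1
    rw [hθ]
    have : ((2:ℂ)^r) ≠ 0 := pow_ne_zero r two_ne_zero
    push_cast
    field_simp
  have hdft : dft r (haarPhi r l p) ω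
      = (Real.sqrt (2^r) : ℂ)⁻¹ * ∑ t : Fin (2^r), haarPhi r l p t * z^(t:ℕ) := by
    rw [dft]
    congr 1
    exact Finset.sum_congr rfl (fun t _ => by rw [hrw t])
  -- RHS is nonneg
  have hRHS : (0:ℝ) ≤ (Real.pi^2 / 4) * (2:ℝ)^(-(j:ℝ)/2) * (2:ℝ)^(-(3 * ((l:ℝ) - (j:ℝ)))/2) := by
    positivity
  -- band facts
  have hband : ω = 0 ∨ (1 ≤ |ω| ∧ |ω| ≤ 2^j) := by
    rcases Nat.eq_zero_or_pos j with hj | hj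
    · subst hj
      have : ω = 0 ∨ ω = 1 := by simpa [bandW] using hω
      rcases this with h | h
      · exact Or.inl h
      · right; rw [h]; norm_num
    · right
      have hj0 : j ≠ 0 := by omega
      simp only [bandW, if_neg hj0, Finset.mem_union, Finset.mem_Icc] at hω
      have hpow : (2:ℤ)^j = 2 * 2^(j-1) := by
        rw [← pow_succ']; congr 1; omega
      have hpos : (0:ℤ) < 2^(j-1) := pow_pos (by norm_num) _
      rcases hω with ⟨h1, h2⟩ | ⟨h1, h2⟩
      · constructor <;> [skip; skip] <;> rw [abs_of_nonpos (by omega)] <;> omega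
      · constructor <;> [skip; skip] <;> rw [abs_of_nonneg (by omega)] <;> omega
  rcases hband with hω0 | ⟨hω1, hω2⟩
  · -- ω = 0 : dft is 0
    subst hω0
    have hz1 : z = 1 := by
      rw [hz, hθ]
      norm_num [Complex.exp_zero]
    have h2 : 2^(r-l) = 2^(r-l-1) + 2^(r-l-1) := by
      rw [← two_mul, ← pow_succ']; congr 1; omega
    rw [hdft, hz1, haar_sum r l p hlr hp' 1]
    simp only [one_pow, Finset.sum_const, Nat.card_Ico, smul_eq_mul, mul_one]
    have hc : ((p*2^(r-l) + 2^(r-l-1)) - p*2^(r-l)) = ((p*2^(r-l) + 2^(r-l)) - (p*2^(r-l) + 2^(r-l-1))) := by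
      omega
    rw [hc, sub_self, mul_zero, mul_zero, norm_zero]
    exact hRHS
  · -- main case
    have hπ := Real.pi_pos
    have hn0 : (0:ℝ) < 2^r := by positivity
    set W : ℝ := |(ω:ℝ)| with hWdef
    have hW1 : (1:ℝ) ≤ W := by
      rw [hWdef, ← Int.cast_abs]; exact_mod_cast hω1
    have hW0 : (0:ℝ) < W := lt_of_lt_of_le one_pos hW1
    have hW2 : W ≤ (2:ℝ)^j := by
      rw [hWdef, ← Int.cast_abs]; exact_mod_cast hω2
    have hWr : W ≤ (2:ℝ)^(r-1) :=
      hW2.trans (pow_le_pow_right₀ one_le_two (by omega))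
    have hωne : ω ≠ 0 := by
      intro h0; rw [h0] at hω1; simp at hω1
    -- z ≠ 1
    have hzne : z ≠ 1 := by
      intro hzz
      rw [hz, Complex.exp_eq_one_iff] at hzz
      obtain ⟨k, hk⟩ := hzz
      have hk' : (θ:ℂ) = (k:ℂ) * 2 * Real.pi := by
        have h1 : (θ:ℂ) * Complex.I = ((k:ℂ) * 2 * Real.pi) * Complex.I := by
          rw [hk]; ring
        exact mul_right_cancel₀ Complex.I_ne_zero h1
      have hkr : θ = (k:ℝ) * 2 * Real.pi := by exact_mod_cast hk'
      have hωk : (ω:ℝ) = (k:ℝ) * 2^r := by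
        rw [hθ] at hkr
        have h2r : ((2:ℝ)^r) ≠ 0 := ne_of_gt hn0
        have hne : (2*Real.pi : ℝ) ≠ 0 := by positivity
        rw [div_eq_iff h2r] at hkr
        exact mul_left_cancel₀ hne (by linear_combination hkr)
      have hωk' : ω = k * 2^r := by exact_mod_cast hωk
      have hkne : k ≠ 0 := by
        intro hk0; rw [hk0, zero_mul] at hωk'; exact hωne hωk'
      have h1k : (1:ℤ) ≤ |k| := Int.one_le_abs hkne
      have habs : (2:ℤ)^r ≤ |ω| := by
        rw [hωk', abs_mul, abs_pow]
        calc (2:ℤ)^r = 1 * |(2:ℤ)|^r := by norm_num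
        _ ≤ |k| * |(2:ℤ)|^r := by
            apply mul_le_mul_of_nonneg_right h1k (by positivity)
      have hjr : (2:ℤ)^j < 2^r := pow_lt_pow_right₀ one_lt_two (by omega)
      omega
    -- rewrite the sum
    set A := p * 2^(r-l) with hA
    set m : ℕ := 2^(r-l-1) with hm
    have h2 : 2^(r-l) = m + m := by
      rw [hm, ← two_mul, ← pow_succ']; congr 1; omega
    have hsplit : A + 2^(r-l) = A + (m + m) := by rw [h2]
    rw [hdft, haar_sum r l p hlr hp' z, hsplit, geom_eval hzne A m]
    -- abs computations
    have habsz : ‖z‖ = 1 := by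
      rw [hz, Complex.norm_exp_ofReal_mul_I]
    have hzm : z^m = Complex.exp ((((m:ℝ))*θ:ℝ) * Complex.I) := by
      rw [hz, ← Complex.exp_nat_mul]
      congr 1
      push_cast
      ring
    have habsm : ‖z^m - 1‖ = 2 * |Real.sin ((m:ℝ)*θ/2)| := by
      rw [hzm, aux_abs_exp_sub_one]
    have habs1 : ‖z - 1‖ = 2 * |Real.sin (θ/2)| := by
      rw [hz, aux_abs_exp_sub_one]
    have hcalc : ‖(Real.sqrt (2^r) : ℂ)⁻¹ *
        ((((2:ℝ) ^ (((l:ℝ) - (r:ℝ))/2) : ℝ) : ℂ) * (-(z^A * (z^m - 1)^2) / (z - 1)))‖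
        = (Real.sqrt (2^r))⁻¹ * ((2:ℝ)^(((l:ℝ) - (r:ℝ))/2) *
          ((2*|Real.sin ((m:ℝ)*θ/2)|)^2 / (2*|Real.sin (θ/2)|))) := by
      simp only [norm_mul, norm_div, norm_neg, norm_pow, norm_inv, Complex.norm_real, Real.norm_eq_abs]
      rw [habsz, habsm, habs1, one_pow, one_mul,
        abs_of_nonneg (Real.sqrt_nonneg _),
        abs_of_pos (Real.rpow_pos_of_pos (by norm_num : (0:ℝ) < 2) _)]
    rw [hcalc]
    -- sin bounds
    have hNb : |Real.sin ((m:ℝ)*θ/2)| ≤ Real.pi * W * m / 2^r := by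
      calc |Real.sin ((m:ℝ)*θ/2)| ≤ |(m:ℝ)*θ/2| := Real.abs_sin_le_abs
      _ = Real.pi * W * m / 2^r := by
          rw [hθ, hWdef]
          rw [abs_div, abs_mul, abs_two, Nat.abs_cast, abs_div, abs_mul, abs_mul, abs_two,
            abs_of_pos hπ, abs_of_pos hn0]
          ring
    have hx1 : Real.pi * W / 2^r ≤ Real.pi / 2 := by
      rw [div_le_div_iff₀ hn0 two_pos]
      have h2r : (2:ℝ)^(r-1) * 2 = 2^r := by
        rw [← pow_succ]; congr 1; omega
      nlinarith
    have hsinlb := Real.mul_le_sin (x := Real.pi * W / 2^r) (by positivity) hx1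
    have hDb : 2*W/2^r ≤ |Real.sin (θ/2)| := by
      have hsin2 : Real.sin (Real.pi * W / 2^r) ≤ |Real.sin (θ/2)| := by
        rcases abs_cases ((ω:ℝ)) with ⟨h1, _⟩ | ⟨h1, _⟩
        · have : Real.pi * W / 2^r = θ/2 := by rw [hWdef, h1, hθ]; ring
          rw [this]; exact le_abs_self _
        · have : Real.pi * W / 2^r = -(θ/2) := by rw [hWdef, h1, hθ]; ring
          rw [this, Real.sin_neg]; exact neg_le_abs _
      have : 2*W/2^r = 2/Real.pi * (Real.pi * W / 2^r) := by
        field_simp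
      linarith [hsinlb.trans hsin2, this ▸ (le_refl (2*W/2^r))]
    -- combine fractional bound
    have hmain : (2*|Real.sin ((m:ℝ)*θ/2)|)^2 / (2*|Real.sin (θ/2)|)
        ≤ Real.pi^2 * W * (m:ℝ)^2 / 2^r := by
      have hD0 : (0:ℝ) < 2*(2*W/2^r) := by positivity
      calc (2*|Real.sin ((m:ℝ)*θ/2)|)^2 / (2*|Real.sin (θ/2)|)
          ≤ (2*(Real.pi * W * m / 2^r))^2 / (2*(2*W/2^r)) := by
            apply div_le_div₀ (by positivity)
              (by
                apply pow_le_pow_left₀ (by positivity)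
                linarith) hD0 (by linarith)
      _ = Real.pi^2 * W * (m:ℝ)^2 / 2^r := by
          field_simp
    -- final chain
    calc (Real.sqrt (2^r))⁻¹ * ((2:ℝ)^(((l:ℝ) - (r:ℝ))/2) *
          ((2*|Real.sin ((m:ℝ)*θ/2)|)^2 / (2*|Real.sin (θ/2)|)))
        ≤ (Real.sqrt (2^r))⁻¹ * ((2:ℝ)^(((l:ℝ) - (r:ℝ))/2) *
          (Real.pi^2 * W * (m:ℝ)^2 / 2^r)) := by
          apply mul_le_mul_of_nonneg_left _ (by positivity)
          apply mul_le_mul_of_nonneg_left hmain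
            (le_of_lt (Real.rpow_pos_of_pos (by norm_num) _))
    _ ≤ (Real.pi^2 / 4) * (2:ℝ)^(-(j:ℝ)/2) * (2:ℝ)^(-(3 * ((l:ℝ) - (j:ℝ)))/2) := by
          have := final_num r j l W hlr hjl hW0 hW2
          rw [hm]
          exact this
end

section
/- There exists a constant C > 0, independent of all parameters, such that for every r ∈ ℕ with r ≥ 1, n = 2^r, and 1 ≤ j ≤ r−1, and for every z ∈ ℂ² with ‖z‖₂ = 1, one has Σ_{ω∈W_j} |Fψ(ω)·z_0 + Fφ_{0,0}(ω)·z_1|² ≤ C · 2^{−j}; equivalently, ‖U_{j0}‖₂ ≤ C' · 2^{−j/2} for a universal constant C'. -/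
theorem bandW_nonempty (j : ℕ) : (bandW j).Nonempty := by
  unfold bandW
  split
  · exact ⟨0, by simp⟩
  · refine Finset.Nonempty.mono Finset.subset_union_right ⟨(2:ℤ)^j, ?_⟩
    rw [Finset.mem_Icc]
    refine ⟨?_, le_refl _⟩
    have h1 : (1:ℤ) ≤ (2:ℤ)^(j-1) := one_le_pow₀ (by norm_num)
    have h2 : (2:ℤ)^(j-1) + (2:ℤ)^(j-1) ≤ (2:ℤ)^j := by
      rw [← two_mul, ← pow_succ']
      exact pow_le_pow_right₀ (by norm_num) (by omega)
    omega

/-- The number of columns of the Fourier–Haar block `U_{jl}`: level `0` contributes the two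
vectors `ψ, φ_{0,0}`, and level `l ≥ 1` contributes the `2^l` wavelets `φ_{l,p}`. -/
def numCols (l : ℕ) : ℕ := if l = 0 then 2 else 2^l

theorem numCols_pos (l : ℕ) : 0 < numCols l := by
  unfold numCols; split <;> positivity

/-- The entry of the Fourier–Haar block `U_{jl}` in row `ω` and column `q`. -/
noncomputable def Uentry (r l : ℕ) (ω : ℤ) (q : ℕ) : ℂ :=
  if l = 0 then (if q = 0 then dft r (haarPsi r) ω else dft r (haarPhi r 0 0) ω)
  else dft r (haarPhi r l q) ω

/-- The coherence `μ(U_{jl}) = max_{ω,q} |(U_{jl})_{ω,q}|²` of the Fourier–Haar block. -/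
noncomputable def coherence (r j l : ℕ) : ℝ :=
  ((bandW j) ×ˢ Finset.range (numCols l)).sup'
    (Finset.Nonempty.product (bandW_nonempty j)
      ⟨0, Finset.mem_range.mpr (numCols_pos l)⟩)
    (fun q => ‖Uentry r l q.1 q.2‖ ^ 2)

/-- The Fourier–Haar block `U_{jl}`, with rows indexed by `ω ∈ W_j` and columns given by the
DFT of the level-`l` Haar vectors. -/
noncomputable def Umat (r j l : ℕ) : Matrix (bandW j) (Fin (numCols l)) ℂ :=
  fun ω q => Uentry r l (ω : ℤ) (q : ℕ)

/-- The `ℓ² → ℓ²` operator norm (largest singular value) of the Fourier–Haar block. -/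
noncomputable def UopNorm (r j l : ℕ) : ℝ :=
  ‖LinearMap.toContinuousLinearMap (Matrix.toEuclideanLin (Umat r j l))‖

/-- The `(j,l)`-th local coherence `μ(j,l) = √μ(U_{jl}) · max_{l' < r} √μ(U_{jl'})`. -/
noncomputable def localCoh (r : ℕ) (hr : 1 ≤ r) (j l : ℕ) : ℝ :=
  Real.sqrt (coherence r j l) *
    (Finset.range r).sup' ⟨0, Finset.mem_range.mpr hr⟩
      (fun l' => Real.sqrt (coherence r j l'))

lemma abs_exp_I_sub_one (θ : ℝ) :
    ‖Complex.exp (θ * Complex.I) - 1‖ = 2 * |Real.sin (θ/2)| := by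
  rw [Complex.exp_mul_I]
  have h1 : (Complex.cos θ + Complex.sin θ * Complex.I - 1)
      = Complex.ofReal (Real.cos θ - 1) + Complex.ofReal (Real.sin θ) * Complex.I := by
    push_cast; ring
  rw [h1, Complex.norm_def, Complex.normSq_add_mul_I]
  have h2 : (Real.cos θ - 1)^2 + Real.sin θ ^2 = (2 * |Real.sin (θ/2)|)^2 := by
    have hc : Real.cos (θ/2) ^ 2 = 1/2 + Real.cos θ / 2 := by
      have := Real.cos_sq (θ/2); rwa [show 2*(θ/2) = θ by ring] at this
    have hs := Real.sin_sq_add_cos_sq (θ/2)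
    have habs : |Real.sin (θ/2)|^2 = Real.sin (θ/2)^2 := sq_abs _
    have hp := Real.sin_sq_add_cos_sq θ
    nlinarith
  rw [h2, Real.sqrt_sq (by positivity)]

lemma bandW_bounds {j : ℕ} (hj : 1 ≤ j) {ω : ℤ} (hω : ω ∈ bandW j) :
    (2:ℤ)^(j-1) ≤ |ω| ∧ |ω| ≤ 2^j := by
  unfold bandW at hω
  rw [if_neg (by omega)] at hω
  have h1 : (0:ℤ) < 2^(j-1) := by positivity
  have h2 : (2:ℤ)^(j-1) ≤ 2^j := pow_le_pow_right₀ (by norm_num) (by omega)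
  rcases Finset.mem_union.mp hω with h | h <;> rw [Finset.mem_Icc] at h
  · rw [abs_of_neg (by omega)]; omega
  · rw [abs_of_pos (by omega)]; omega

-- exp term as power of q

lemma exp_term (r : ℕ) (ω : ℤ) (t : ℕ) :
    Complex.exp (2*Real.pi*Complex.I*(ω:ℂ)*(t:ℂ)/(2^r:ℂ))
      = Complex.exp ((((2*Real.pi*ω/2^r : ℝ)):ℂ) * Complex.I) ^ t := by
  rw [← Complex.exp_nat_mul]
  congr 1
  push_cast
  ring

lemma q_pow_n (r : ℕ) (ω : ℤ) :
    Complex.exp ((((2*Real.pi*ω/2^r : ℝ)):ℂ) * Complex.I) ^ (2^r) = 1 := by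
  rw [← Complex.exp_nat_mul]
  have h : ((2^r : ℕ):ℂ) * ((((2*Real.pi*ω/2^r : ℝ)):ℂ) * Complex.I)
      = (ω:ℂ) * (2*(Real.pi:ℂ)*Complex.I) := by
    push_cast
    have h2 : ((2:ℂ))^r ≠ 0 := by norm_num
    field_simp
  rw [h, Complex.exp_int_mul_two_pi_mul_I]

lemma q_ne_one (r j : ℕ) (ω : ℤ) (hr : 1 ≤ r) (hj1 : 1 ≤ j) (hjr : j ≤ r - 1)
    (hω : ω ∈ bandW j) :
    Complex.exp ((((2*Real.pi*ω/2^r : ℝ)):ℂ) * Complex.I) ≠ 1 := by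
  intro h
  rw [Complex.exp_eq_one_iff] at h
  obtain ⟨k, hk⟩ := h
  have h1 : ((2*Real.pi*ω/2^r : ℝ):ℂ) = (((k:ℝ) * (2*Real.pi) : ℝ):ℂ) := by
    have := mul_right_cancel₀ Complex.I_ne_zero
      (by rw [hk]; push_cast; ring :
        ((2*Real.pi*ω/2^r : ℝ):ℂ) * Complex.I = (((k:ℝ)*(2*Real.pi):ℝ):ℂ) * Complex.I)
    exact this
  have h2 : (2*Real.pi*ω/2^r : ℝ) = (k:ℝ) * (2*Real.pi) := Complex.ofReal_inj.mp h1
  have hπ : (0:ℝ) < Real.pi := Real.pi_pos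
  have h2r : (0:ℝ) < (2:ℝ)^r := by positivity
  have h3 : (ω:ℝ) = (k:ℝ) * (2:ℝ)^r := by
    field_simp at h2
    nlinarith [h2]
  have h4 : (ω:ℝ) = (((k * 2^r : ℤ)):ℝ) := by push_cast; exact h3
  have h5 : ω = k * 2^r := by exact_mod_cast h4
  obtain ⟨hlo, hhi⟩ := bandW_bounds hj1 hω
  have hpos : (0:ℤ) < 2^(j-1) := by positivity
  have hjr2 : (2:ℤ)^j ≤ 2^(r-1) := pow_le_pow_right₀ (by norm_num) hjr
  have hrr : (2:ℤ)^(r-1) < 2^r := by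
    have : (2:ℤ)^(r-1) * 1 < 2^(r-1) * 2 := by
      have : (0:ℤ) < 2^(r-1) := by positivity
      omega
    calc (2:ℤ)^(r-1) = 2^(r-1)*1 := by ring
    _ < 2^(r-1)*2 := this
    _ = 2^(r-1+1) := by ring
    _ = 2^r := by congr 1; omega
  rcases eq_or_ne k 0 with hk0 | hk0
  · subst hk0
    simp at h5
    rw [h5] at hlo
    simp at hlo
    omega
  · have hbig : (2:ℤ)^r ≤ |ω| := by
      rw [h5, abs_mul, abs_pow]
      have hk1 : (1:ℤ) ≤ |k| := Int.one_le_abs hk0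
      have h2a : |(2:ℤ)|^r = 2^r := by norm_num
      rw [h2a]
      nlinarith [pow_pos (show (0:ℤ) < 2 by norm_num) r]
    omega

lemma geom_zero (r j : ℕ) (ω : ℤ) (hr : 1 ≤ r) (hj1 : 1 ≤ j) (hjr : j ≤ r - 1)
    (hω : ω ∈ bandW j) :
    ∑ t ∈ Finset.range (2^r), Complex.exp ((((2*Real.pi*ω/2^r : ℝ)):ℂ) * Complex.I) ^ t = 0 := by
  rw [geom_sum_eq (q_ne_one r j ω hr hj1 hjr hω), q_pow_n r ω]
  simp

lemma dft_psi_eq_zero (r j : ℕ) (ω : ℤ) (hr : 1 ≤ r) (hj1 : 1 ≤ j) (hjr : j ≤ r - 1)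
    (hω : ω ∈ bandW j) : dft r (haarPsi r) ω = 0 := by
  unfold dft haarPsi
  set q := Complex.exp ((((2*Real.pi*ω/2^r : ℝ)):ℂ) * Complex.I) with hq
  have h1 : ∀ t : Fin (2^r),
      ((((2:ℝ) ^ (-(r:ℝ)/2) : ℝ) : ℂ)) * Complex.exp (2*Real.pi*Complex.I*(ω:ℂ)*((t:ℕ):ℂ)/(2^r:ℂ))
        = ((((2:ℝ) ^ (-(r:ℝ)/2) : ℝ) : ℂ)) * q ^ (t:ℕ) := by
    intro t; rw [exp_term r ω t]
  rw [Finset.sum_congr rfl (fun t _ => h1 t)]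
  rw [Fin.sum_univ_eq_sum_range (fun t => ((((2:ℝ) ^ (-(r:ℝ)/2) : ℝ) : ℂ)) * q ^ t)]
  rw [← Finset.mul_sum, geom_zero r j ω hr hj1 hjr hω]
  simp

lemma haarPhi_eq (r : ℕ) (t : Fin (2^r)) :
    haarPhi r 0 0 t = if (t:ℕ) < 2^(r-1) then (((2:ℝ) ^ (-(r:ℝ)/2) : ℝ) : ℂ)
      else -(((2:ℝ) ^ (-(r:ℝ)/2) : ℝ) : ℂ) := by
  unfold haarPhi
  have ht := t.isLt
  have hval : (((0:ℕ):ℝ) - (r:ℝ))/2 = -(r:ℝ)/2 := by push_cast; ring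
  simp only [Nat.sub_zero, Nat.cast_zero, zero_mul, zero_add, one_mul, Nat.zero_le, true_and,
    hval]
  rcases lt_or_ge (t:ℕ) (2^(r-1)) with h | h
  · rw [if_pos h, if_pos h]
    norm_num
  · rw [if_neg (by omega), if_pos ⟨h, ht⟩, if_neg (by omega)]
    norm_num

lemma dft_phi_bound (r j : ℕ) (ω : ℤ) (hr : 1 ≤ r) (hj1 : 1 ≤ j) (hjr : j ≤ r - 1)
    (hω : ω ∈ bandW j) :
    ‖dft r (haarPhi r 0 0) ω‖ ≤ 2 / (2:ℝ)^j := by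
  set θ : ℝ := 2*Real.pi*ω/2^r with hθ
  set q := Complex.exp (((θ:ℝ):ℂ) * Complex.I) with hq
  set c : ℂ := (((2:ℝ) ^ (-(r:ℝ)/2) : ℝ) : ℂ) with hc
  set m := 2^(r-1) with hm
  set n := 2^r with hn
  have hmn : m ≤ n := Nat.pow_le_pow_right (by norm_num) (by omega)
  set S1 := ∑ t ∈ Finset.range m, q ^ t with hS1
  -- sum computation
  have hsum : ∑ t : Fin n, haarPhi r 0 0 t
        * Complex.exp (2*Real.pi*Complex.I*(ω:ℂ)*((t:ℕ):ℂ)/((2:ℂ)^r)) = 2 * c * S1 := by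
    have h1 : ∀ t : Fin n, haarPhi r 0 0 t
          * Complex.exp (2*Real.pi*Complex.I*(ω:ℂ)*((t:ℕ):ℂ)/((2:ℂ)^r))
        = (if (t:ℕ) < m then c else -c) * q ^ (t:ℕ) := by
      intro t; rw [haarPhi_eq r t, exp_term r ω t]
    rw [Finset.sum_congr rfl (fun t _ => h1 t)]
    rw [Fin.sum_univ_eq_sum_range (fun t => (if t < m then c else -c) * q ^ t)]
    rw [Finset.range_eq_Ico, ← Finset.sum_Ico_consecutive _ (Nat.zero_le m) hmn]
    have h2 : ∑ t ∈ Finset.Ico 0 m, (if t < m then c else -c) * q ^ t = c * S1 := by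
      rw [Finset.mul_sum]
      apply Finset.sum_congr (Eq.symm (Finset.range_eq_Ico (a := m)))
      intro t ht
      rw [Finset.mem_range] at ht
      rw [if_pos ht]
    have h3 : ∑ t ∈ Finset.Ico m n, (if t < m then c else -c) * q ^ t
        = -c * ∑ t ∈ Finset.Ico m n, q ^ t := by
      rw [Finset.mul_sum]
      apply Finset.sum_congr rfl
      intro t ht
      rw [Finset.mem_Ico] at ht
      rw [if_neg (by omega)]
    have h4 : S1 + ∑ t ∈ Finset.Ico m n, q ^ t = 0 := by
      have := geom_zero r j ω hr hj1 hjr hω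
      rw [Finset.range_eq_Ico, ← Finset.sum_Ico_consecutive _ (Nat.zero_le m) hmn] at this
      rw [hS1, Finset.range_eq_Ico]
      exact this
    have h5 : ∑ t ∈ Finset.Ico m n, q ^ t = -S1 := by linear_combination h4
    rw [h2, h3, h5]
    ring
  -- abs of S1
  have hqne := q_ne_one r j ω hr hj1 hjr hω
  have habsq : ‖q‖ = 1 := Complex.norm_exp_ofReal_mul_I θ
  have hd : 0 < ‖q - 1‖ := by
    apply norm_pos_iff.mpr
    exact sub_ne_zero.mpr hqne
  have hS1abs : ‖S1‖ ≤ 2 / ‖q - 1‖ := by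
    rw [hS1, geom_sum_eq hqne, norm_div]
    gcongr
    calc ‖Complex.exp (((θ:ℝ):ℂ) * Complex.I) ^ m - 1‖
        = ‖q ^ m - 1‖ := rfl
      _ ≤ ‖q ^ m‖ + ‖(1:ℂ)‖ := norm_sub_le _ _
      _ = 1 + 1 := by
          rw [norm_pow, habsq, one_pow, norm_one]
      _ = 2 := by norm_num
  -- lower bound on |q - 1|
  have hqd : ‖q - 1‖ = 2 * |Real.sin (θ/2)| := abs_exp_I_sub_one θ
  obtain ⟨hlo, hhi⟩ := bandW_bounds hj1 hω
  have hloR : (2:ℝ)^(j-1) ≤ |(ω:ℝ)| := by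
    rw [← Int.cast_abs]
    exact_mod_cast hlo
  have hhiR : |(ω:ℝ)| ≤ (2:ℝ)^j := by
    rw [← Int.cast_abs]
    exact_mod_cast hhi
  have hjr2 : (2:ℝ)^j ≤ 2^(r-1) := pow_le_pow_right₀ (by norm_num) hjr
  have h2r1 : (2:ℝ)^(r-1) * 2 = 2^r := by
    rw [← pow_succ]
    congr 1
    omega
  have hπ : (0:ℝ) < Real.pi := Real.pi_pos
  set y : ℝ := Real.pi * |(ω:ℝ)| / 2^r with hy
  have hy0 : 0 ≤ y := by positivity
  have hy2 : y ≤ Real.pi / 2 := by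
    rw [hy, div_le_div_iff₀ (by positivity) (by norm_num)]
    calc Real.pi * |(ω:ℝ)| * 2 ≤ Real.pi * (2^(r-1)) * 2 := by nlinarith
      _ = Real.pi * 2^r := by rw [mul_assoc, h2r1]
  have hsin_eq : |Real.sin (θ/2)| = Real.sin y := by
    have hsy : 0 ≤ Real.sin y :=
      Real.sin_nonneg_of_nonneg_of_le_pi hy0 (by linarith)
    rcases le_or_gt 0 (ω:ℝ) with h | h
    · have : θ/2 = y := by
        rw [hθ, hy, abs_of_nonneg h]; ring
      rw [this, abs_of_nonneg hsy]
    · have : θ/2 = -y := by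
        rw [hθ, hy, abs_of_neg h]; ring
      rw [this, Real.sin_neg, abs_neg, abs_of_nonneg hsy]
  have hsiny : (2:ℝ)^j / 2^r ≤ Real.sin y := by
    have hjine := Real.mul_le_sin hy0 hy2
    have h2j : (2:ℝ)^j = 2 * 2^(j-1) := by
      rw [← pow_succ']
      congr 1
      omega
    have : 2 / Real.pi * y = 2 * |(ω:ℝ)| / 2^r := by
      rw [hy]; field_simp
    rw [this] at hjine
    refine le_trans ?_ hjine
    rw [h2j]
    gcongr
  have hqd_lb : 2 * ((2:ℝ)^j / 2^r) ≤ ‖q - 1‖ := by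
    rw [hqd, hsin_eq]
    nlinarith
  -- assemble
  have habs_dft : ‖dft r (haarPhi r 0 0) ω‖
      = (Real.sqrt ((2:ℝ)^r))⁻¹ * ((2:ℝ)^(-(r:ℝ)/2) * (2 * ‖S1‖)) := by
    unfold dft
    rw [hsum]
    rw [norm_mul, norm_inv]
    have h1 : ‖(Real.sqrt ((2:ℝ)^r) : ℂ)‖ = Real.sqrt ((2:ℝ)^r) := by
      rw [Complex.norm_real, Real.norm_eq_abs, abs_of_nonneg (Real.sqrt_nonneg _)]
    have h2 : ‖2 * c * S1‖ = (2:ℝ)^(-(r:ℝ)/2) * (2 * ‖S1‖) := by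
      rw [norm_mul, norm_mul, hc, Complex.norm_real, Real.norm_eq_abs, Complex.norm_two,
        abs_of_nonneg (by positivity : (0:ℝ) ≤ (2:ℝ)^(-(r:ℝ)/2))]
      ring
    rw [h2]
    norm_num [h1]
  have hAc : (2:ℝ)^(-(r:ℝ)/2) = (Real.sqrt ((2:ℝ)^r))⁻¹ := by
    have hA : Real.sqrt ((2:ℝ)^r) = (2:ℝ)^((r:ℝ)/2) := by
      rw [Real.sqrt_eq_rpow, ← Real.rpow_natCast 2 r, ← Real.rpow_mul (by norm_num)]
      congr 1
      ring
    rw [hA, ← Real.rpow_neg (by norm_num), neg_div]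
  have hAA : (Real.sqrt ((2:ℝ)^r))⁻¹ * (Real.sqrt ((2:ℝ)^r))⁻¹ = ((2:ℝ)^r)⁻¹ := by
    rw [← mul_inv, Real.mul_self_sqrt (by positivity)]
  have hS1' : ‖S1‖ ≤ 2 / (2 * ((2:ℝ)^j / 2^r)) := by
    refine hS1abs.trans (div_le_div_of_nonneg_left (by norm_num) (by positivity) hqd_lb)
  calc ‖dft r (haarPhi r 0 0) ω‖
      = ((2:ℝ)^r)⁻¹ * (2 * ‖S1‖) := by
        rw [habs_dft, hAc, ← mul_assoc, hAA]
    _ ≤ ((2:ℝ)^r)⁻¹ * (2 * (2 / (2 * ((2:ℝ)^j / 2^r)))) := by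
        gcongr
    _ = 2 / (2:ℝ)^j := by
        field_simp

lemma card_bandW_le (j : ℕ) (hj : 1 ≤ j) : (bandW j).card ≤ 4 * 2^j := by
  have hsub : bandW j ⊆ Finset.Icc (-(2:ℤ)^j) (2^j) := by
    intro ω hω
    obtain ⟨_, hhi⟩ := bandW_bounds hj hω
    rw [Finset.mem_Icc]
    constructor
    · linarith [neg_abs_le ω]
    · linarith [le_abs_self ω]
  have hcard := Finset.card_le_card hsub
  rw [Int.card_Icc] at hcard
  have h : ((2:ℤ)^j + 1 - (-(2:ℤ)^j)) = ((2^j : ℕ):ℤ) + 1 + ((2^j:ℕ):ℤ) := by push_cast; ring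
  rw [h] at hcard
  have hm : 1 ≤ 2^j := Nat.one_le_two_pow
  omega

lemma sum_bound (r j : ℕ) (hr : 1 ≤ r) (hj1 : 1 ≤ j) (hjr : j ≤ r - 1) (z : Fin 2 → ℂ) :
    ∑ ω ∈ bandW j, ‖dft r (haarPsi r) ω * z 0 + dft r (haarPhi r 0 0) ω * z 1‖^2
      ≤ 16/(2:ℝ)^j * (‖z 0‖^2 + ‖z 1‖^2) := by
  have key : ∀ ω ∈ bandW j,
      ‖dft r (haarPsi r) ω * z 0 + dft r (haarPhi r 0 0) ω * z 1‖^2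
        ≤ (2/(2:ℝ)^j)^2 * ‖z 1‖^2 := by
    intro ω hω
    rw [dft_psi_eq_zero r j ω hr hj1 hjr hω, zero_mul, zero_add, norm_mul, mul_pow]
    have h := dft_phi_bound r j ω hr hj1 hjr hω
    have h0 : 0 ≤ ‖dft r (haarPhi r 0 0) ω‖ := norm_nonneg _
    have h1 : 0 ≤ ‖z 1‖ := norm_nonneg _
    nlinarith [sq_nonneg (‖z 1‖), sq_nonneg (‖dft r (haarPhi r 0 0) ω‖ + 2/2^j),
      mul_le_mul h h h0 (by positivity : (0:ℝ) ≤ 2/2^j)]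
  calc ∑ ω ∈ bandW j, ‖dft r (haarPsi r) ω * z 0 + dft r (haarPhi r 0 0) ω * z 1‖^2
      ≤ (bandW j).card • ((2/(2:ℝ)^j)^2 * ‖z 1‖^2) :=
        Finset.sum_le_card_nsmul _ _ _ key
    _ = ((bandW j).card : ℝ) * ((2/(2:ℝ)^j)^2 * ‖z 1‖^2) := nsmul_eq_mul _ _
    _ ≤ ((4 * 2^j : ℕ) : ℝ) * ((2/(2:ℝ)^j)^2 * ‖z 1‖^2) := by
        gcongr
        exact_mod_cast card_bandW_le j hj1
    _ = 16/(2:ℝ)^j * ‖z 1‖^2 := by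
        push_cast
        have h2 : (0:ℝ) < (2:ℝ)^j := by positivity
        field_simp
        ring
    _ ≤ 16/(2:ℝ)^j * (‖z 0‖^2 + ‖z 1‖^2) := by
        have hb : (0:ℝ) ≤ ‖z 0‖^2 := by positivity
        have h2 : (0:ℝ) < (2:ℝ)^j := by positivity
        have h16 : (0:ℝ) ≤ 16/(2:ℝ)^j := by positivity
        nlinarith

lemma pow_rpow_16 (j : ℕ) : 16/(2:ℝ)^j = 16 * (2:ℝ)^(-(j:ℝ)) := by
  rw [Real.rpow_neg (by norm_num), Real.rpow_natCast, div_eq_mul_inv]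

lemma M_sq (j : ℕ) : (4 * (2:ℝ)^(-(j:ℝ)/2))^2 = 16/(2:ℝ)^j := by
  rw [mul_pow, ← Real.rpow_natCast ((2:ℝ)^(-(j:ℝ)/2)) 2, ← Real.rpow_mul (by norm_num)]
  have h : (-(j:ℝ)/2) * ((2:ℕ):ℝ) = -(j:ℝ) := by push_cast; ring
  rw [h, Real.rpow_neg (by norm_num), Real.rpow_natCast]
  norm_num
  rw [div_eq_mul_inv]

/-- There are universal constants `C, C' > 0` such that for every `r ≥ 1` and `1 ≤ j ≤ r-1`:
for every `z ∈ ℂ²` with `‖z‖₂ = 1` one has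
`∑_{ω ∈ W_j} |Fψ(ω) z₀ + Fφ_{0,0}(ω) z₁|² ≤ C 2^{-j}`; equivalently,
`‖U_{j0}‖₂ ≤ C' 2^{-j/2}`. -/
theorem Uj0_bound : ∃ C : ℝ, 0 < C ∧ ∃ C' : ℝ, 0 < C' ∧
    ∀ r j : ℕ, 1 ≤ r → 1 ≤ j → j ≤ r - 1 →
      (∀ z : Fin 2 → ℂ, ‖z 0‖^2 + ‖z 1‖^2 = 1 →
        ∑ ω ∈ bandW j,
          ‖dft r (haarPsi r) ω * z 0 + dft r (haarPhi r 0 0) ω * z 1‖^2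
            ≤ C * (2:ℝ)^(-(j:ℝ))) ∧
      UopNorm r j 0 ≤ C' * (2:ℝ)^(-(j:ℝ)/2) := by
  refine ⟨16, by norm_num, 4, by norm_num, fun r j hr hj1 hjr => ⟨fun z hz => ?_, ?_⟩⟩
  · have h := sum_bound r j hr hj1 hjr z
    rw [hz, mul_one, pow_rpow_16 j] at h
    exact h
  · have hb : ∀ z : EuclideanSpace ℂ (Fin 2),
        ‖(Matrix.toEuclideanLin (Umat r j 0 : Matrix (bandW j) (Fin 2) ℂ)) z‖
          ≤ (4 * (2:ℝ)^(-(j:ℝ)/2)) * ‖z‖ := by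
      intro z
      set A : Matrix (bandW j) (Fin 2) ℂ := (Umat r j 0 : Matrix (bandW j) (Fin 2) ℂ) with hA
      have hz2 : ‖z‖^2 = ‖z 0‖^2 + ‖z 1‖^2 := by
        rw [EuclideanSpace.norm_eq, Real.sq_sqrt (by positivity), Fin.sum_univ_two]
      have happ : ∀ ω : (bandW j : Finset ℤ), (Matrix.toEuclideanLin A) z ω
          = dft r (haarPsi r) (ω:ℤ) * z 0 + dft r (haarPhi r 0 0) (ω:ℤ) * z 1 := by
        intro ω
        rw [Matrix.toEuclideanLin_apply]
        simp only [PiLp.toLp_apply, Matrix.mulVec, dotProduct,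
          Fin.sum_univ_two]
        have hA0 : A ω 0 = dft r (haarPsi r) (ω:ℤ) := by
          show Uentry r 0 (ω:ℤ) ((0 : Fin 2):ℕ) = _
          simp [Uentry]
        have hA1 : A ω 1 = dft r (haarPhi r 0 0) (ω:ℤ) := by
          show Uentry r 0 (ω:ℤ) ((1 : Fin 2):ℕ) = _
          simp [Uentry]
        rw [hA0, hA1]
      have h1 : ‖(Matrix.toEuclideanLin A) z‖^2
          = ∑ ω ∈ bandW j,
            ‖dft r (haarPsi r) ω * z 0 + dft r (haarPhi r 0 0) ω * z 1‖^2 := by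
        rw [EuclideanSpace.norm_eq, Real.sq_sqrt (by positivity)]
        have hterm : ∀ ω : (bandW j : Finset ℤ),
            ‖(Matrix.toEuclideanLin A) z ω‖^2
              = (fun w : ℤ =>
                  ‖dft r (haarPsi r) w * z 0 + dft r (haarPhi r 0 0) w * z 1‖^2)
                (ω:ℤ) := by
          intro ω
          rw [happ ω]
        rw [Finset.sum_congr rfl (fun ω _ => hterm ω)]
        exact Finset.sum_coe_sort (bandW j)
          (fun w : ℤ =>
            ‖dft r (haarPsi r) w * z 0 + dft r (haarPhi r 0 0) w * z 1‖^2)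
      have h2 := sum_bound r j hr hj1 hjr z
      have key : ‖(Matrix.toEuclideanLin A) z‖^2
          ≤ ((4 * (2:ℝ)^(-(j:ℝ)/2)) * ‖z‖)^2 := by
        rw [h1, mul_pow, M_sq j, hz2]
        exact h2
      exact le_of_pow_le_pow_left₀ two_ne_zero (by positivity) key
    unfold UopNorm
    apply ContinuousLinearMap.opNorm_le_bound _ (by positivity)
    intro z
    exact hb z
end

section
/- There exists a constant C > 0, independent of all parameters, such that for every r ∈ ℕ with r ≥ 1, n = 2^r, all nonnegative reals k_0,…,k_{r−1}, and every 0 ≤ j ≤ r−1, one has |W_j| · Σ_{l=0}^{r−1} μ(j,l) k_l ≤ C · (k_j + Σ_{l=0, l≠j}^{r−1} 2^{−|j−l|/2} k_l), where |W_0| = 2 and |W_j| = 2^j for j ≥ 1. -/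
open Complex Finset


lemma exp_I_factor (φ : ℝ) :
    (1 : ℂ) - Complex.exp (φ * I) = Complex.exp ((φ/2 : ℝ) * I) * (-2 * I * Complex.sin ((φ/2 : ℝ))) := by
  have h1 : Complex.exp ((φ/2 : ℝ) * I) * Complex.exp (-(φ/2 : ℝ) * I) = 1 := by
    rw [← Complex.exp_add]; ring_nf; exact Complex.exp_zero
  have h2 : Complex.exp ((φ/2 : ℝ) * I) * Complex.exp ((φ/2 : ℝ) * I) = Complex.exp (φ * I) := by
    rw [← Complex.exp_add]; congr 1; push_cast; ring
  calc (1:ℂ) - Complex.exp (φ * I)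
      = Complex.exp ((φ/2 : ℝ) * I) * Complex.exp (-(φ/2 : ℝ) * I)
        - Complex.exp ((φ/2 : ℝ) * I) * Complex.exp ((φ/2 : ℝ) * I) := by rw [h1, h2]
    _ = Complex.exp ((φ/2 : ℝ) * I) * (-2 * I * Complex.sin ((φ/2 : ℝ))) := by
        rw [Complex.sin]
        linear_combination (Complex.exp ((φ/2:ℝ) * I) *
          (Complex.exp (-(φ/2:ℝ) * I) - Complex.exp ((φ/2:ℝ) * I))) * Complex.I_sq

lemma abs_one_sub_exp (φ : ℝ) :
    ‖1 - Complex.exp (φ * I)‖ = 2 * |Real.sin (φ/2)| := by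
  rw [exp_I_factor, norm_mul, Complex.norm_exp_ofReal_mul_I, norm_mul, norm_mul,
    ← Complex.ofReal_sin, Complex.norm_real, Real.norm_eq_abs]
  simp

lemma abs_one_sub_exp_le_two (φ : ℝ) : ‖1 - Complex.exp (φ * I)‖ ≤ 2 := by
  rw [abs_one_sub_exp]
  have h : |Real.sin (φ/2)| ≤ 1 := Real.abs_sin_le_one _
  linarith

lemma abs_one_sub_exp_le_abs (φ : ℝ) : ‖1 - Complex.exp (φ * I)‖ ≤ |φ| := by
  rw [abs_one_sub_exp]
  have h := Real.abs_sin_le_abs (x := φ/2)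
  rw [abs_div, _root_.abs_two] at h
  linarith

lemma le_abs_one_sub_exp (φ : ℝ) (h : |φ| ≤ Real.pi) :
    2 / Real.pi * |φ| ≤ ‖1 - Complex.exp (φ * I)‖ := by
  rw [abs_one_sub_exp]
  have h2 : |φ/2| ≤ Real.pi / 2 := by rw [abs_div, _root_.abs_two]; linarith
  have h3 := Real.mul_abs_le_abs_sin h2
  rw [abs_div, _root_.abs_two] at h3
  have hpi := Real.pi_pos
  rw [div_mul_eq_mul_div, div_le_iff₀ hpi] at h3 ⊢
  linarith

lemma abs_geom_sum_le_of_ne_one {q : ℂ} (hq : q ≠ 1) (m : ℕ) :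
    ‖∑ s ∈ Finset.range m, q ^ s‖ ≤ (‖q‖ ^ m + 1) / ‖q - 1‖ := by
  rw [geom_sum_eq hq, norm_div]
  have hd : 0 < ‖q - 1‖ := by
    simpa using norm_pos_iff.mpr (sub_ne_zero.mpr hq)
  gcongr
  calc ‖q ^ m - 1‖ ≤ ‖q ^ m‖ + ‖(1:ℂ)‖ := by
        simpa [sub_eq_add_neg] using norm_add_le (q^m) (-1)
  _ = ‖q‖ ^ m + 1 := by rw [norm_pow, norm_one]

lemma sum_double_indicator (N a m : ℕ) (hbound : a + 2*m ≤ N) (c : ℂ) (E : ℕ → ℂ) :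
    ∑ n ∈ Finset.range N,
      (if a ≤ n ∧ n < a+m then c else if a+m ≤ n ∧ n < a+2*m then -c else 0) * E n
    = c * (∑ s ∈ Finset.range m, E (a+s)) - c * (∑ s ∈ Finset.range m, E (a+m+s)) := by
  have hpt : ∀ n, (if a ≤ n ∧ n < a+m then c else if a+m ≤ n ∧ n < a+2*m then -c else 0) * E n
      = (if n ∈ Finset.Ico a (a+m) then c * E n else 0)
        + (if n ∈ Finset.Ico (a+m) (a+2*m) then -(c * E n) else 0) := by
    intro n
    simp only [Finset.mem_Ico]
    by_cases h1 : a ≤ n ∧ n < a+m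
    · rw [if_pos h1, if_pos h1, if_neg (by omega)]; ring
    · rw [if_neg h1, if_neg h1]
      by_cases h2 : a+m ≤ n ∧ n < a+2*m
      · rw [if_pos h2, if_pos h2]; ring
      · rw [if_neg h2, if_neg h2]; ring
  rw [Finset.sum_congr rfl (fun n _ => hpt n), Finset.sum_add_distrib]
  rw [Finset.sum_ite_mem, Finset.sum_ite_mem]
  rw [Finset.inter_eq_right.mpr (by intro x hx; rw [Finset.mem_Ico] at hx; rw [Finset.mem_range]; omega),
     Finset.inter_eq_right.mpr (by intro x hx; rw [Finset.mem_Ico] at hx; rw [Finset.mem_range]; omega)]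
  rw [Finset.sum_Ico_eq_sum_range, Finset.sum_Ico_eq_sum_range]
  simp only [add_tsub_cancel_left]
  have : a + 2*m - (a+m) = m := by omega
  rw [this, ← Finset.mul_sum, Finset.sum_neg_distrib, ← Finset.mul_sum]
  ring

lemma sum_haarPhi_mul_exp (r l p : ℕ) (hl : l + 1 ≤ r) (hp : p < 2^l) (θ : ℝ) :
    ∑ t : Fin (2^r), haarPhi r l p t * Complex.exp ((θ * (t:ℕ) : ℝ) * I)
      = (((2:ℝ) ^ (((l:ℝ) - r)/2) : ℝ) : ℂ)
        * Complex.exp ((θ * (p * 2^(r-l)) : ℝ) * I)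
        * (1 - Complex.exp ((θ:ℝ) * I) ^ (2^(r-l-1)))
        * ∑ s ∈ Finset.range (2^(r-l-1)), Complex.exp ((θ:ℝ) * I) ^ s := by
  have key : 2^(r-l) = 2 * 2^(r-l-1) := by
    rw [← pow_succ']; congr 1; omega
  have hbound : p * 2^(r-l) + 2 * 2^(r-l-1) ≤ 2^r := by
    have h1 : p * 2^(r-l) + 2 * 2^(r-l-1) = (p+1) * 2^(r-l) := by rw [key]; ring
    rw [h1]
    calc (p+1) * 2^(r-l) ≤ 2^l * 2^(r-l) := Nat.mul_le_mul_right _ hp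
    _ = 2^r := by rw [← pow_add]; congr 1; omega
  simp only [haarPhi]
  rw [Fin.sum_univ_eq_sum_range (fun n =>
    (if p * 2^(r-l) ≤ n ∧ n < p * 2^(r-l) + 2^(r-l-1) then (((2:ℝ) ^ (((l:ℝ) - r)/2) : ℝ) : ℂ)
     else if p * 2^(r-l) + 2^(r-l-1) ≤ n ∧ n < (p+1) * 2^(r-l) then -(((2:ℝ) ^ (((l:ℝ) - r)/2) : ℝ) : ℂ)
     else 0) * Complex.exp ((θ * n : ℝ) * I)) (2^r)]
  rw [show (p+1) * 2^(r-l) = p * 2^(r-l) + 2 * 2^(r-l-1) from by rw [key]; ring]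
  rw [sum_double_indicator (2^r) (p * 2^(r-l)) (2^(r-l-1)) hbound _ _]
  have e1 : ∀ s : ℕ, Complex.exp ((θ * (p * 2^(r-l) + s : ℕ) : ℝ) * I)
      = Complex.exp ((θ * (p * 2^(r-l)) : ℝ) * I) * Complex.exp ((θ:ℝ) * I) ^ s := by
    intro s
    rw [← Complex.exp_nat_mul, ← Complex.exp_add]
    congr 1; push_cast; ring
  have e2 : ∀ s : ℕ, Complex.exp ((θ * (p * 2^(r-l) + 2^(r-l-1) + s : ℕ) : ℝ) * I)
      = Complex.exp ((θ * (p * 2^(r-l)) : ℝ) * I) * Complex.exp ((θ:ℝ) * I) ^ (2^(r-l-1))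
        * Complex.exp ((θ:ℝ) * I) ^ s := by
    intro s
    rw [← Complex.exp_nat_mul, ← Complex.exp_nat_mul, ← Complex.exp_add, ← Complex.exp_add]
    congr 1; push_cast; ring
  rw [Finset.sum_congr rfl (fun s _ => e1 s), Finset.sum_congr rfl (fun s _ => e2 s)]
  rw [← Finset.mul_sum]
  rw [show ∀ x y : ℂ, (∑ s ∈ Finset.range (2^(r-l-1)), x * y * Complex.exp ((θ:ℝ) * I) ^ s)
      = x * y * ∑ s ∈ Finset.range (2^(r-l-1)), Complex.exp ((θ:ℝ) * I) ^ s from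
      fun x y => by rw [← Finset.mul_sum]]
  ring

lemma two_rpow_helper (x y z : ℝ) : (2:ℝ)^x * (2:ℝ)^y * (2:ℝ)^z = (2:ℝ)^(x+y+z) := by
  rw [← Real.rpow_add two_pos, ← Real.rpow_add two_pos]

lemma nat_two_pow_cast' (k : ℕ) : ((2^k : ℕ) : ℝ) = (2:ℝ)^(k:ℝ) := by
  push_cast
  exact (Real.rpow_natCast 2 k).symm

lemma abs_dft_haarPhi_le (r l p j : ℕ) (hl : l + 1 ≤ r) (hp : p < 2^l) (hj : j + 1 ≤ r)
    (ω : ℤ) (hω0 : ω ≠ 0) (hωlo : (2:ℝ)^(j:ℝ) ≤ 2 * |(ω:ℝ)|) (hωhi : |(ω:ℝ)| ≤ (2:ℝ)^(j:ℝ)) :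
    ‖dft r (haarPhi r l p) ω‖ ≤
      7 * (2:ℝ)^(-(j:ℝ)/2) * (2:ℝ)^(-|(j:ℝ)-(l:ℝ)|/2) := by
  set θ : ℝ := 2 * Real.pi * ω / 2^r with hθ
  have hπ := Real.pi_pos
  have hωpos : (0:ℝ) < |(ω:ℝ)| := by
    simp only [abs_pos, ne_eq, Int.cast_eq_zero]; exact hω0
  have h2r : ((2:ℝ)^r : ℝ) = (2:ℝ)^(r:ℝ) := (Real.rpow_natCast 2 r).symm
  have h2rpos : (0:ℝ) < (2:ℝ)^(r:ℝ) := Real.rpow_pos_of_pos two_pos _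
  -- |θ|
  have hθabs : |θ| = 2 * Real.pi * |(ω:ℝ)| / (2:ℝ)^(r:ℝ) := by
    rw [hθ, h2r, abs_div, abs_mul, abs_mul, _root_.abs_two, abs_of_pos hπ,
      abs_of_pos h2rpos]
  have hj2r : (2:ℝ)^(j:ℝ) * 2 ≤ (2:ℝ)^(r:ℝ) := by
    have h := Real.rpow_le_rpow_of_exponent_le one_le_two
      (show (j:ℝ)+1 ≤ (r:ℝ) by exact_mod_cast hj)
    rw [Real.rpow_add two_pos, Real.rpow_one] at h
    linarith
  have hθle : |θ| ≤ Real.pi := by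
    rw [hθabs, div_le_iff₀ h2rpos]
    nlinarith
  have hq1 : (4:ℝ) * |(ω:ℝ)| / (2:ℝ)^(r:ℝ) ≤ ‖1 - Complex.exp ((θ:ℝ) * I)‖ := by
    have h := le_abs_one_sub_exp θ hθle
    rw [hθabs] at h
    have he : 2 / Real.pi * (2 * Real.pi * |(ω:ℝ)| / (2:ℝ)^(r:ℝ)) = 4 * |(ω:ℝ)| / (2:ℝ)^(r:ℝ) := by
      field_simp; ring
    linarith [he ▸ h]
  have hqpos : (0:ℝ) < ‖1 - Complex.exp ((θ:ℝ) * I)‖ := by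
    refine lt_of_lt_of_le ?_ hq1
    positivity
  have hqne : Complex.exp ((θ:ℝ) * I) ≠ 1 := by
    intro h
    rw [h] at hqpos
    simp at hqpos
  have hgeom : ‖∑ s ∈ Finset.range (2^(r-l-1)), Complex.exp ((θ:ℝ) * I) ^ s‖
      ≤ (2:ℝ)^((r:ℝ)-(j:ℝ)) := by
    have h1 := abs_geom_sum_le_of_ne_one hqne (2^(r-l-1))
    rw [Complex.norm_exp_ofReal_mul_I, one_pow] at h1
    have h2 : ‖Complex.exp ((θ:ℝ) * I) - 1‖
        = ‖1 - Complex.exp ((θ:ℝ) * I)‖ := norm_sub_rev _ _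
    rw [h2] at h1
    have h3 : (1+1) / ‖1 - Complex.exp ((θ:ℝ) * I)‖
        ≤ (1+1) / ((4:ℝ) * |(ω:ℝ)| / (2:ℝ)^(r:ℝ)) := by
      gcongr
    have h4 : (1+1) / ((4:ℝ) * |(ω:ℝ)| / (2:ℝ)^(r:ℝ)) = (2:ℝ)^(r:ℝ) / (2 * |(ω:ℝ)|) := by
      field_simp; ring
    have h5 : (2:ℝ)^(r:ℝ) / (2 * |(ω:ℝ)|) ≤ (2:ℝ)^(r:ℝ) / (2:ℝ)^(j:ℝ) := by
      exact div_le_div_of_nonneg_left (by positivity) (Real.rpow_pos_of_pos two_pos _) hωlo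
    have h6 : (2:ℝ)^(r:ℝ) / (2:ℝ)^(j:ℝ) = (2:ℝ)^((r:ℝ)-(j:ℝ)) :=
      (Real.rpow_sub two_pos _ _).symm
    linarith
  have hnat : (2:ℕ)^(r-l-1) * 2 * 2^l = 2^r := by
    rw [← pow_succ, ← pow_add]; congr 1; omega
  have hpow : Complex.exp ((θ:ℝ) * I) ^ (2^(r-l-1))
      = Complex.exp ((Real.pi * ω / ((2^l : ℕ) : ℝ) : ℝ) * I) := by
    rw [← Complex.exp_nat_mul]
    congr 1
    rw [hθ]
    have hnatC : ((2:ℂ))^(r-l-1) * 2 * 2^l = 2^r := by exact_mod_cast hnat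
    have h1 : ((2:ℂ))^r ≠ 0 := pow_ne_zero _ two_ne_zero
    have h2 : ((2:ℂ))^l ≠ 0 := pow_ne_zero _ two_ne_zero
    push_cast
    field_simp
    ring_nf
    linear_combination hnatC
  have h2l : (0:ℝ) < (2:ℝ)^(l:ℝ) := Real.rpow_pos_of_pos two_pos _
  have hM2 : ‖1 - Complex.exp ((θ:ℝ) * I) ^ (2^(r-l-1))‖ ≤ 2 := by
    rw [hpow]; exact abs_one_sub_exp_le_two _
  have hMφ : ‖1 - Complex.exp ((θ:ℝ) * I) ^ (2^(r-l-1))‖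
      ≤ Real.pi * (2:ℝ)^((j:ℝ)-(l:ℝ)) := by
    rw [hpow]
    refine (abs_one_sub_exp_le_abs _).trans ?_
    rw [abs_div, abs_mul, abs_of_pos hπ, _root_.abs_of_nonneg (by positivity : (0:ℝ) ≤ ((2^l:ℕ):ℝ)),
      nat_two_pow_cast' l]
    rw [div_le_iff₀ h2l, mul_assoc, ← Real.rpow_add two_pos,
      show (j:ℝ)-(l:ℝ)+(l:ℝ) = (j:ℝ) by ring]
    have : Real.pi * |(ω:ℝ)| ≤ Real.pi * (2:ℝ)^(j:ℝ) := by
      exact mul_le_mul_of_nonneg_left hωhi (le_of_lt hπ)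
    linarith
  -- express the dft
  have hdfteq : dft r (haarPhi r l p) ω
      = (Real.sqrt (2^r) : ℂ)⁻¹ * ((((2:ℝ) ^ (((l:ℝ) - r)/2) : ℝ) : ℂ)
        * Complex.exp ((θ * (p * 2^(r-l)) : ℝ) * I)
        * (1 - Complex.exp ((θ:ℝ) * I) ^ (2^(r-l-1)))
        * ∑ s ∈ Finset.range (2^(r-l-1)), Complex.exp ((θ:ℝ) * I) ^ s) := by
    rw [← sum_haarPhi_mul_exp r l p hl hp θ]
    unfold dft
    congr 1
    refine Finset.sum_congr rfl (fun t _ => ?_)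
    congr 1
    rw [hθ]
    push_cast
    have : ((2:ℂ))^r ≠ 0 := pow_ne_zero _ two_ne_zero
    field_simp
  have hsqrt : ‖((Real.sqrt (2^r) : ℂ))⁻¹‖ = (2:ℝ)^(-(r:ℝ)/2) := by
    rw [norm_inv, Complex.norm_real, Real.norm_eq_abs, _root_.abs_of_nonneg (Real.sqrt_nonneg _)]
    rw [show ((2:ℝ)^r) = (2:ℝ)^(r:ℝ) from h2r,
      show -(r:ℝ)/2 = -((r:ℝ)/2) by ring, Real.rpow_neg (le_of_lt two_pos)]
    congr 1
    rw [Real.sqrt_eq_rpow, ← Real.rpow_mul (le_of_lt two_pos)]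
    congr 1
    ring
  have habs : ‖dft r (haarPhi r l p) ω‖
      = (2:ℝ)^(-(r:ℝ)/2) * (2:ℝ)^(((l:ℝ)-(r:ℝ))/2)
        * ‖1 - Complex.exp ((θ:ℝ) * I) ^ (2^(r-l-1))‖
        * ‖∑ s ∈ Finset.range (2^(r-l-1)), Complex.exp ((θ:ℝ) * I) ^ s‖ := by
    rw [hdfteq, norm_mul, norm_mul, norm_mul, norm_mul, hsqrt,
      Complex.norm_real, Real.norm_eq_abs, Complex.norm_exp_ofReal_mul_I,
      abs_of_pos (Real.rpow_pos_of_pos two_pos _)]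
    ring
  have hpos1 : (0:ℝ) < (2:ℝ)^(-(r:ℝ)/2) := Real.rpow_pos_of_pos two_pos _
  have hpos2 : (0:ℝ) < (2:ℝ)^(((l:ℝ)-(r:ℝ))/2) := Real.rpow_pos_of_pos two_pos _
  rcases le_or_gt l j with hc | hc
  · have habsj : |(j:ℝ)-(l:ℝ)| = (j:ℝ)-(l:ℝ) := by
      apply _root_.abs_of_nonneg
      have : (l:ℝ) ≤ (j:ℝ) := by exact_mod_cast hc
      linarith
    rw [habsj, habs]
    have step : (2:ℝ)^(-(r:ℝ)/2) * (2:ℝ)^(((l:ℝ)-(r:ℝ))/2)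
        * ‖1 - Complex.exp ((θ:ℝ) * I) ^ (2^(r-l-1))‖
        * ‖∑ s ∈ Finset.range (2^(r-l-1)), Complex.exp ((θ:ℝ) * I) ^ s‖
        ≤ (2:ℝ)^(-(r:ℝ)/2) * (2:ℝ)^(((l:ℝ)-(r:ℝ))/2) * 2 * (2:ℝ)^((r:ℝ)-(j:ℝ)) := by
      gcongr
    refine step.trans ?_
    rw [show (2:ℝ)^(-(r:ℝ)/2) * (2:ℝ)^(((l:ℝ)-(r:ℝ))/2) * 2 * (2:ℝ)^((r:ℝ)-(j:ℝ))
        = 2 * ((2:ℝ)^(-(r:ℝ)/2) * (2:ℝ)^(((l:ℝ)-(r:ℝ))/2) * (2:ℝ)^((r:ℝ)-(j:ℝ))) by ring,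
      two_rpow_helper,
      show 7 * (2:ℝ)^(-(j:ℝ)/2) * (2:ℝ)^(-((j:ℝ)-(l:ℝ))/2)
        = 7 * ((2:ℝ)^(-(j:ℝ)/2) * (2:ℝ)^(-((j:ℝ)-(l:ℝ))/2)) by ring,
      ← Real.rpow_add two_pos,
      show -(r:ℝ)/2 + ((l:ℝ)-(r:ℝ))/2 + ((r:ℝ)-(j:ℝ)) = -(j:ℝ)/2 + -((j:ℝ)-(l:ℝ))/2 by ring]
    have hX := Real.rpow_pos_of_pos two_pos (-(j:ℝ)/2 + -((j:ℝ)-(l:ℝ))/2)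
    linarith
  · have habsj : |(j:ℝ)-(l:ℝ)| = (l:ℝ)-(j:ℝ) := by
      rw [abs_sub_comm]
      apply _root_.abs_of_nonneg
      have : (j:ℝ) ≤ (l:ℝ) := by exact_mod_cast (le_of_lt hc)
      linarith
    rw [habsj, habs]
    have step : (2:ℝ)^(-(r:ℝ)/2) * (2:ℝ)^(((l:ℝ)-(r:ℝ))/2)
        * ‖1 - Complex.exp ((θ:ℝ) * I) ^ (2^(r-l-1))‖
        * ‖∑ s ∈ Finset.range (2^(r-l-1)), Complex.exp ((θ:ℝ) * I) ^ s‖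
        ≤ (2:ℝ)^(-(r:ℝ)/2) * (2:ℝ)^(((l:ℝ)-(r:ℝ))/2)
          * (Real.pi * (2:ℝ)^((j:ℝ)-(l:ℝ))) * (2:ℝ)^((r:ℝ)-(j:ℝ)) := by
      gcongr
    refine step.trans ?_
    rw [show (2:ℝ)^(-(r:ℝ)/2) * (2:ℝ)^(((l:ℝ)-(r:ℝ))/2)
          * (Real.pi * (2:ℝ)^((j:ℝ)-(l:ℝ))) * (2:ℝ)^((r:ℝ)-(j:ℝ))
        = Real.pi * ((2:ℝ)^(-(r:ℝ)/2) * (2:ℝ)^(((l:ℝ)-(r:ℝ))/2) * (2:ℝ)^((j:ℝ)-(l:ℝ))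
          * (2:ℝ)^((r:ℝ)-(j:ℝ))) by ring,
      show 7 * (2:ℝ)^(-(j:ℝ)/2) * (2:ℝ)^(-((l:ℝ)-(j:ℝ))/2)
        = 7 * ((2:ℝ)^(-(j:ℝ)/2) * (2:ℝ)^(-((l:ℝ)-(j:ℝ))/2)) by ring,
      two_rpow_helper, ← Real.rpow_add two_pos, ← Real.rpow_add two_pos,
      show -(r:ℝ)/2 + ((l:ℝ)-(r:ℝ))/2 + ((j:ℝ)-(l:ℝ)) + ((r:ℝ)-(j:ℝ))
        = -(j:ℝ)/2 + -((l:ℝ)-(j:ℝ))/2 by ring]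
    have hX := Real.rpow_pos_of_pos two_pos (-(j:ℝ)/2 + -((l:ℝ)-(j:ℝ))/2)
    have hπ7 : Real.pi ≤ 7 := by linarith [Real.pi_le_four]
    nlinarith

lemma bandW_cases {j : ℕ} {ω : ℤ} (hω : ω ∈ bandW j) :
    (ω = 0 ∧ j = 0) ∨ ((2:ℝ)^(j:ℝ) ≤ 2 * |(ω:ℝ)| ∧ |(ω:ℝ)| ≤ (2:ℝ)^(j:ℝ) ∧ ω ≠ 0) := by
  unfold bandW at hω
  by_cases hj : j = 0
  · subst hj
    rw [if_pos rfl] at hω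
    simp only [Finset.mem_insert, Finset.mem_singleton] at hω
    rcases hω with rfl | rfl
    · exact Or.inl ⟨rfl, rfl⟩
    · refine Or.inr ⟨?_, ?_, one_ne_zero⟩ <;> simp [Real.rpow_natCast]
  · rw [if_neg hj] at hω
    have h21 : (1:ℤ) ≤ (2:ℤ)^(j-1) := one_le_pow₀ (by norm_num)
    have h2j : (2:ℤ)^j = 2 * (2:ℤ)^(j-1) := by
      rw [← pow_succ']; congr 1; omega
    rw [Finset.mem_union, Finset.mem_Icc, Finset.mem_Icc] at hω
    have habs : (2:ℤ)^(j-1) ≤ |ω| ∧ |ω| ≤ (2:ℤ)^j ∧ ω ≠ 0 := by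
      rcases _root_.abs_cases ω with hc | hc <;>
      · rcases hω with h | h
        · refine ⟨by omega, by omega, by omega⟩
        · refine ⟨by omega, by omega, by omega⟩
    refine Or.inr ⟨?_, ?_, habs.2.2⟩
    · have : ((2:ℤ)^j : ℝ) ≤ 2 * (|ω| : ℝ) := by
        have := habs.1
        have hc : ((2:ℤ)^(j-1) : ℝ) ≤ (|ω| : ℝ) := by exact_mod_cast this
        have h2jr : ((2:ℤ)^j : ℝ) = 2 * ((2:ℤ)^(j-1) : ℝ) := by exact_mod_cast h2j
        linarith
      rw [show ((2:ℤ)^j : ℝ) = ((2^j : ℕ) : ℝ) by push_cast; ring, nat_two_pow_cast'] at this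
      rwa [show (|ω| : ℝ) = |(ω:ℝ)| by push_cast [Int.cast_abs]; ring] at this
    · have : (|ω| : ℝ) ≤ ((2:ℤ)^j : ℝ) := by exact_mod_cast habs.2.1
      rw [show ((2:ℤ)^j : ℝ) = ((2^j : ℕ) : ℝ) by push_cast; ring, nat_two_pow_cast'] at this
      rwa [show (|ω| : ℝ) = |(ω:ℝ)| by push_cast [Int.cast_abs]; ring] at this

lemma bandW_card_le (j : ℕ) : (bandW j).card ≤ 2 * 2^j := by
  unfold bandW
  by_cases hj : j = 0
  · subst hj; rw [if_pos rfl]; simp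
  · rw [if_neg hj]
    refine le_trans (Finset.card_union_le _ _) ?_
    rw [Int.card_Icc, Int.card_Icc]
    have h21 : (1:ℤ) ≤ (2:ℤ)^(j-1) := one_le_pow₀ (by norm_num)
    have h2j : (2:ℤ)^j = 2 * (2:ℤ)^(j-1) := by
      rw [← pow_succ']; congr 1; omega
    have hcast : ((2^j : ℕ) : ℤ) = (2:ℤ)^j := by push_cast; ring
    omega

lemma dft_haarPsi_abs_zero (r : ℕ) : ‖dft r (haarPsi r) 0‖ = 1 := by
  unfold dft haarPsi
  simp only [Int.cast_zero, mul_zero, zero_mul, zero_div, Complex.exp_zero, mul_one]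
  rw [Finset.sum_const, Finset.card_univ, Fintype.card_fin]
  rw [norm_mul, norm_inv, Complex.norm_real, Real.norm_eq_abs, _root_.abs_of_nonneg (Real.sqrt_nonneg _)]
  rw [show ((2:ℝ)^r) = (2:ℝ)^(r:ℝ) from (Real.rpow_natCast 2 r).symm]
  rw [Real.sqrt_eq_rpow, ← Real.rpow_mul (le_of_lt two_pos)]
  rw [nsmul_eq_mul, norm_mul, Complex.norm_natCast, Complex.norm_real, Real.norm_eq_abs,
    _root_.abs_of_pos (Real.rpow_pos_of_pos two_pos _)]
  rw [show ((2^r : ℕ) : ℝ) = (2:ℝ)^(r:ℝ) from nat_two_pow_cast' r]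
  rw [← Real.rpow_neg (le_of_lt two_pos), ← Real.rpow_add two_pos, ← Real.rpow_add two_pos]
  rw [show -((r:ℝ)*(1/2)) + ((r:ℝ) + -(r:ℝ)/2) = 0 by ring, Real.rpow_zero]

lemma dft_haarPsi_eq_zero (r : ℕ) (ω : ℤ) (hω : ω ≠ 0)
    (h : 2 * |(ω:ℝ)| ≤ (2:ℝ)^(r:ℝ)) : dft r (haarPsi r) ω = 0 := by
  set θ : ℝ := 2 * Real.pi * ω / 2^r with hθ
  have hπ := Real.pi_pos
  have h2rpos : (0:ℝ) < (2:ℝ)^(r:ℝ) := Real.rpow_pos_of_pos two_pos _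
  have h2r : ((2:ℝ)^r : ℝ) = (2:ℝ)^(r:ℝ) := (Real.rpow_natCast 2 r).symm
  have hωpos : (0:ℝ) < |(ω:ℝ)| := by
    simp only [abs_pos, ne_eq, Int.cast_eq_zero]; exact hω
  have hθabs : |θ| = 2 * Real.pi * |(ω:ℝ)| / (2:ℝ)^(r:ℝ) := by
    rw [hθ, h2r, abs_div, abs_mul, abs_mul, _root_.abs_two, _root_.abs_of_pos hπ,
      _root_.abs_of_pos h2rpos]
  have hθle : |θ| ≤ Real.pi := by
    rw [hθabs, div_le_iff₀ h2rpos]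
    nlinarith
  have hq1 : (4:ℝ) * |(ω:ℝ)| / (2:ℝ)^(r:ℝ) ≤ ‖1 - Complex.exp ((θ:ℝ) * I)‖ := by
    have h := le_abs_one_sub_exp θ hθle
    rw [hθabs] at h
    have he : 2 / Real.pi * (2 * Real.pi * |(ω:ℝ)| / (2:ℝ)^(r:ℝ))
        = 4 * |(ω:ℝ)| / (2:ℝ)^(r:ℝ) := by field_simp; ring
    linarith [he ▸ h]
  have hqne : Complex.exp ((θ:ℝ) * I) ≠ 1 := by
    intro hq
    rw [hq] at hq1
    simp only [sub_self, norm_zero] at hq1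
    have : (0:ℝ) < 4 * |(ω:ℝ)| / (2:ℝ)^(r:ℝ) := by positivity
    linarith
  unfold dft haarPsi
  have hexp : ∀ t : Fin (2^r),
      (((2:ℝ)^(-(r:ℝ)/2) : ℝ) : ℂ) * Complex.exp (2 * Real.pi * Complex.I * (ω:ℂ) * ((t:ℕ):ℂ) / (2^r : ℂ))
      = (((2:ℝ)^(-(r:ℝ)/2) : ℝ) : ℂ) * Complex.exp ((θ:ℝ) * I) ^ (t:ℕ) := by
    intro t
    congr 1
    rw [← Complex.exp_nat_mul]
    congr 1
    rw [hθ]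
    push_cast
    have : ((2:ℂ))^r ≠ 0 := pow_ne_zero _ two_ne_zero
    field_simp
  rw [Finset.sum_congr rfl (fun t _ => hexp t), ← Finset.mul_sum]
  rw [Fin.sum_univ_eq_sum_range (fun n => Complex.exp ((θ:ℝ) * I) ^ n) (2^r)]
  rw [geom_sum_eq hqne]
  have htop : Complex.exp ((θ:ℝ) * I) ^ (2^r) = 1 := by
    rw [← Complex.exp_nat_mul]
    rw [show ((2^r : ℕ) : ℂ) * ((θ:ℝ) * I) = (ω:ℂ) * (2 * Real.pi * I) from ?_]
    · exact Complex.exp_int_mul_two_pi_mul_I ω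
    rw [hθ]
    push_cast
    rw [show ((2:ℂ)^r : ℂ) = (((2^r : ℕ):ℝ) : ℂ) by push_cast; ring]
    have : (((2^r : ℕ):ℝ) : ℂ) ≠ 0 := by
      simp only [ne_eq, Complex.ofReal_eq_zero, Nat.cast_eq_zero]
      positivity
    field_simp
  rw [htop, sub_self, zero_div, mul_zero, mul_zero]

lemma dft_haarPhi_zero (r l p : ℕ) (hl : l+1 ≤ r) (hp : p < 2^l) :
    dft r (haarPhi r l p) 0 = 0 := by
  unfold dft
  have hexp : ∀ t : Fin (2^r),
      haarPhi r l p t * Complex.exp (2 * Real.pi * Complex.I * ((0:ℤ):ℂ) * ((t:ℕ):ℂ) / (2^r : ℂ))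
      = haarPhi r l p t * Complex.exp ((((0:ℝ) * (t:ℕ) : ℝ)) * I) := by
    intro t
    norm_num
  rw [Finset.sum_congr rfl (fun t _ => hexp t), sum_haarPhi_mul_exp r l p hl hp 0]
  norm_num

lemma abs_Uentry_le (r j l : ℕ) (hj : j + 1 ≤ r) (hl : l + 1 ≤ r)
    {ω : ℤ} (hω : ω ∈ bandW j) {q : ℕ} (hq : q < numCols l) :
    ‖Uentry r l ω q‖ ≤ 7 * (2:ℝ)^(-(j:ℝ)/2) * (2:ℝ)^(-|(j:ℝ)-(l:ℝ)|/2) := by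
  have hql : l ≠ 0 → q < 2^l := by
    intro h; simpa [numCols, h] using hq
  rcases bandW_cases hω with ⟨hω0, hj0⟩ | ⟨hlo, hhi, hne⟩
  · subst hω0; subst hj0
    unfold Uentry
    by_cases hl0 : l = 0
    · subst hl0
      rw [if_pos rfl]
      by_cases hq0 : q = 0
      · rw [if_pos hq0, dft_haarPsi_abs_zero]
        norm_num
      · rw [if_neg hq0, dft_haarPhi_zero r 0 0 (by omega) (by norm_num), norm_zero]
        positivity
    · rw [if_neg hl0, dft_haarPhi_zero r l q hl (hql hl0), norm_zero]
      positivity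
  · have h2ω2r : 2 * |(ω:ℝ)| ≤ (2:ℝ)^(r:ℝ) := by
      have h1 : 2 * |(ω:ℝ)| ≤ 2 * (2:ℝ)^(j:ℝ) := by linarith
      have h2 : (2:ℝ)^((j:ℝ)+1) ≤ (2:ℝ)^(r:ℝ) :=
        Real.rpow_le_rpow_of_exponent_le one_le_two (by exact_mod_cast hj)
      rw [Real.rpow_add two_pos, Real.rpow_one] at h2
      linarith
    unfold Uentry
    by_cases hl0 : l = 0
    · subst hl0
      rw [if_pos rfl]
      by_cases hq0 : q = 0
      · rw [if_pos hq0, dft_haarPsi_eq_zero r ω hne h2ω2r, norm_zero]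
        positivity
      · rw [if_neg hq0]
        exact abs_dft_haarPhi_le r 0 0 j (by omega) (by norm_num) hj ω hne hlo hhi
    · rw [if_neg hl0]
      exact abs_dft_haarPhi_le r l q j hl (hql hl0) hj ω hne hlo hhi

lemma coherence_le (r j l : ℕ) (hj : j+1 ≤ r) (hl : l+1 ≤ r) :
    coherence r j l ≤ (7 * (2:ℝ)^(-(j:ℝ)/2) * (2:ℝ)^(-|(j:ℝ)-(l:ℝ)|/2))^2 := by
  apply Finset.sup'_le
  rintro ⟨ω, q⟩ hmem
  rw [Finset.mem_product] at hmem
  have h1 := abs_Uentry_le r j l hj hl hmem.1 (Finset.mem_range.mp hmem.2)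
  exact pow_le_pow_left₀ (norm_nonneg _) h1 2

lemma sqrt_coherence_le (r j l : ℕ) (hj : j+1 ≤ r) (hl : l+1 ≤ r) :
    Real.sqrt (coherence r j l) ≤ 7 * (2:ℝ)^(-(j:ℝ)/2) * (2:ℝ)^(-|(j:ℝ)-(l:ℝ)|/2) := by
  refine (Real.sqrt_le_sqrt (coherence_le r j l hj hl)).trans ?_
  rw [Real.sqrt_sq (by positivity)]

lemma localCoh_le (r : ℕ) (hr : 1 ≤ r) (j l : ℕ) (hj : j+1 ≤ r) (hl : l+1 ≤ r) :
    localCoh r hr j l ≤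
      49 * (2:ℝ)^(-(j:ℝ)/2) * (2:ℝ)^(-(j:ℝ)/2) * (2:ℝ)^(-|(j:ℝ)-(l:ℝ)|/2) := by
  unfold localCoh
  have hsup : (Finset.range r).sup' ⟨0, Finset.mem_range.mpr hr⟩
      (fun l' => Real.sqrt (coherence r j l')) ≤ 7 * (2:ℝ)^(-(j:ℝ)/2) := by
    apply Finset.sup'_le
    intro l' hl'
    refine (sqrt_coherence_le r j l' hj (Finset.mem_range.mp hl')).trans ?_
    have h1 : (2:ℝ)^(-|(j:ℝ)-(l':ℝ)|/2) ≤ 1 := by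
      apply Real.rpow_le_one_of_one_le_of_nonpos one_le_two
      have := abs_nonneg ((j:ℝ)-(l':ℝ))
      linarith
    nlinarith [Real.rpow_pos_of_pos two_pos (-(j:ℝ)/2)]
  have hsup0 : (0:ℝ) ≤ (Finset.range r).sup' ⟨0, Finset.mem_range.mpr hr⟩
      (fun l' => Real.sqrt (coherence r j l')) := by
    refine le_trans (Real.sqrt_nonneg (coherence r j 0)) ?_
    exact Finset.le_sup' (fun l' => Real.sqrt (coherence r j l')) (Finset.mem_range.mpr hr)
  calc Real.sqrt (coherence r j l) * _
      ≤ (7 * (2:ℝ)^(-(j:ℝ)/2) * (2:ℝ)^(-|(j:ℝ)-(l:ℝ)|/2)) * (7 * (2:ℝ)^(-(j:ℝ)/2)) :=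
        mul_le_mul (sqrt_coherence_le r j l hj hl) hsup hsup0 (by positivity)
    _ = 49 * (2:ℝ)^(-(j:ℝ)/2) * (2:ℝ)^(-(j:ℝ)/2) * (2:ℝ)^(-|(j:ℝ)-(l:ℝ)|/2) := by ring

/-- There is a universal constant `C > 0` such that for every `r ≥ 1`, all nonnegative reals
`k_0,…,k_{r-1}` and every `0 ≤ j ≤ r-1`:
`|W_j| ∑_{l<r} μ(j,l) k_l ≤ C (k_j + ∑_{l<r, l≠j} 2^{-|j-l|/2} k_l)`. -/
theorem card_mul_localCoh_sum_le : ∃ C : ℝ, 0 < C ∧ ∀ r : ℕ, ∀ hr : 1 ≤ r,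
    ∀ k : ℕ → ℝ, (∀ l, 0 ≤ k l) → ∀ j : ℕ, j ≤ r - 1 →
    ((bandW j).card : ℝ) * ∑ l ∈ Finset.range r, localCoh r hr j l * k l ≤
      C * (k j + ∑ l ∈ (Finset.range r).erase j, (2:ℝ)^(-|(j:ℝ) - (l:ℝ)|/2) * k l) := by
  refine ⟨98, by norm_num, ?_⟩
  intro r hr k hk j hjle
  have hj : j + 1 ≤ r := by omega
  have hjmem : j ∈ Finset.range r := Finset.mem_range.mpr (by omega)
  have hcard : ((bandW j).card : ℝ) ≤ 2 * (2:ℝ)^(j:ℝ) := by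
    have h := bandW_card_le j
    calc ((bandW j).card : ℝ) ≤ ((2*2^j : ℕ):ℝ) := by exact_mod_cast h
    _ = 2*(2:ℝ)^(j:ℝ) := by rw [Nat.cast_mul, nat_two_pow_cast', Nat.cast_ofNat]
  have hterm : ∀ l ∈ Finset.range r, localCoh r hr j l * k l ≤
      (49 * (2:ℝ)^(-(j:ℝ)/2) * (2:ℝ)^(-(j:ℝ)/2) * (2:ℝ)^(-|(j:ℝ)-(l:ℝ)|/2)) * k l := by
    intro l hl
    have : l < r := Finset.mem_range.mp hl
    exact mul_le_mul_of_nonneg_right (localCoh_le r hr j l hj (by omega)) (hk l)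
  have hS' : (0:ℝ) ≤ ∑ l ∈ Finset.range r,
      (49 * (2:ℝ)^(-(j:ℝ)/2) * (2:ℝ)^(-(j:ℝ)/2) * (2:ℝ)^(-|(j:ℝ)-(l:ℝ)|/2)) * k l := by
    apply Finset.sum_nonneg
    intro l _
    have := hk l
    positivity
  calc ((bandW j).card : ℝ) * ∑ l ∈ Finset.range r, localCoh r hr j l * k l
      ≤ ((bandW j).card : ℝ) * ∑ l ∈ Finset.range r,
          (49 * (2:ℝ)^(-(j:ℝ)/2) * (2:ℝ)^(-(j:ℝ)/2) * (2:ℝ)^(-|(j:ℝ)-(l:ℝ)|/2)) * k l :=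
        mul_le_mul_of_nonneg_left (Finset.sum_le_sum hterm) (Nat.cast_nonneg _)
    _ ≤ (2 * (2:ℝ)^(j:ℝ)) * ∑ l ∈ Finset.range r,
          (49 * (2:ℝ)^(-(j:ℝ)/2) * (2:ℝ)^(-(j:ℝ)/2) * (2:ℝ)^(-|(j:ℝ)-(l:ℝ)|/2)) * k l :=
        mul_le_mul_of_nonneg_right hcard hS'
    _ = ∑ l ∈ Finset.range r, 98 * ((2:ℝ)^(-|(j:ℝ)-(l:ℝ)|/2) * k l) := by
        rw [Finset.mul_sum]
        refine Finset.sum_congr rfl (fun l _ => ?_)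
        have h1 : (2:ℝ)^(j:ℝ) * ((2:ℝ)^(-(j:ℝ)/2) * (2:ℝ)^(-(j:ℝ)/2)) = 1 := by
          rw [← Real.rpow_add two_pos, ← Real.rpow_add two_pos,
            show (j:ℝ) + (-(j:ℝ)/2 + -(j:ℝ)/2) = 0 by ring, Real.rpow_zero]
        linear_combination (98 * ((2:ℝ)^(-|(j:ℝ)-(l:ℝ)|/2) * k l)) * h1
    _ = 98 * (k j + ∑ l ∈ (Finset.range r).erase j, (2:ℝ)^(-|(j:ℝ) - (l:ℝ)|/2) * k l) := by
        rw [← Finset.add_sum_erase _ _ hjmem, mul_add, Finset.mul_sum]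
        congr 1
        rw [show ((j:ℝ)-(j:ℝ)) = 0 by ring, abs_zero, neg_zero, zero_div, Real.rpow_zero, one_mul]
end
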